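/- Let p be a prime, n, m ≥ 1, and GR(p^n,m) = (ZMod (p^n))[X]/(f) for a monic basic irreducible f of degree m. Then every element a ∈ GR(p^n,m) admits a unique p-adic representation a = a_0 + a_1·p + ⋯ + a_{n−1}·p^{n−1} in which every coefficient a_i satisfies a_i^{p^m} = a_i (i.e. the a_i are Teichmüller elements). -/

import Mathlib

open Polynomial Finset

lemma aux_step {R : Type*} [CommRing R] (p : ℕ) (hp : p.Prime) {x y : R} {k : ℕ} (hk : 1 ≤ k)
    (h : (p:R)^k ∣ x - y) : (p:R)^(k+1) ∣ x^p - y^p := by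
  have hpxy : (p:R) ∣ x - y := (dvd_pow_self (p:R) (Nat.one_le_iff_ne_zero.mp hk)).trans h
  have hsum : (p:R) ∣ ∑ i ∈ range p, x ^ i * y ^ (p - 1 - i) := by
    have h1 : (p:R) ∣ ∑ i ∈ range p, (x ^ i * y ^ (p - 1 - i) - y ^ (p-1)) := by
      apply Finset.dvd_sum
      intro i hi
      have hi' : i < p := Finset.mem_range.mp hi
      have : x ^ i * y ^ (p - 1 - i) - y ^ (p-1) = (x ^ i - y ^ i) * y ^ (p - 1 - i) := by
        rw [sub_mul, ← pow_add]
        congr 2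
        omega
      rw [this]
      exact Dvd.dvd.mul_right (hpxy.trans (sub_dvd_pow_sub_pow x y i)) _
    have h2 : ∑ i ∈ range p, (x ^ i * y ^ (p - 1 - i) - y ^ (p-1))
        = (∑ i ∈ range p, x ^ i * y ^ (p - 1 - i)) - p * y ^ (p-1) := by
      rw [Finset.sum_sub_distrib, Finset.sum_const, card_range, nsmul_eq_mul]
    rw [h2] at h1
    have := dvd_add h1 (Dvd.intro _ rfl : (p:R) ∣ (p:R) * y ^ (p-1))
    simpa using this
  have := mul_dvd_mul hsum h
  rw [geom_sum₂_mul] at this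
  calc (p:R)^(k+1) = (p:R) * (p:R)^k := by ring
  _ ∣ x ^ p - y ^ p := this

lemma aux_iter {R : Type*} [CommRing R] (p : ℕ) (hp : p.Prime) {x y : R} {k : ℕ} (hk : 1 ≤ k)
    (h : (p:R)^k ∣ x - y) : ∀ e : ℕ, (p:R)^(k+e) ∣ x^(p^e) - y^(p^e) := by
  intro e
  induction e with
  | zero => simpa using h
  | succ e ih =>
      have := aux_step p hp (le_trans hk (Nat.le_add_right k e)) ih
      rw [← pow_mul, ← pow_mul, ← pow_succ] at this
      convert this using 2 <;> omega

lemma zmod_cancel (p n : ℕ) (hp : p.Prime) {j : ℕ} (hj : j < n) {c d : ZMod (p^n)}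
    (h : (p:ZMod (p^n))^j * c = (p:ZMod (p^n))^(j+1) * d) : (p : ZMod (p^n)) ∣ c := by
  have hpn : NeZero (p^n) := ⟨(pow_pos hp.pos n).ne'⟩
  have hc : ((c.val : ℕ) : ZMod (p^n)) = c := ZMod.natCast_rightInverse c
  have hd : ((d.val : ℕ) : ZMod (p^n)) = d := ZMod.natCast_rightInverse d
  have h' : ((p^j * c.val : ℕ) : ZMod (p^n)) = ((p^(j+1) * d.val : ℕ) : ZMod (p^n)) := by
    push_cast
    rw [hc, hd, h]
  have hmod : (p^j * c.val) ≡ (p^(j+1) * d.val) [MOD p^n] :=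
    (ZMod.natCast_eq_natCast_iff _ _ _).mp h'
  have hint : (p^n : ℤ) ∣ (p^(j+1) * d.val : ℤ) - (p^j * c.val : ℤ) := by
    have := hmod.dvd
    push_cast at this ⊢
    exact this
  have h1 : ((p:ℤ)^(j+1)) ∣ (p^j * c.val : ℤ) := by
    have hd2 : ((p:ℤ)^(j+1)) ∣ (p^n : ℤ) := pow_dvd_pow _ hj
    have : (p^j * c.val : ℤ) = (p^(j+1) * d.val : ℤ) - ((p^(j+1) * d.val : ℤ) - (p^j * c.val : ℤ)) := by ring
    rw [this]
    exact dvd_sub (Dvd.dvd.mul_right (by norm_num) _) (hd2.trans hint)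
  have h2 : (p:ℤ) ∣ (c.val : ℤ) := by
    have hne : ((p:ℤ)^j) ≠ 0 := pow_ne_zero _ (by exact_mod_cast hp.pos.ne')
    rw [pow_succ] at h1
    rcases h1 with ⟨t, ht⟩
    refine ⟨t, ?_⟩
    have : (p:ℤ)^j * (c.val : ℤ) = (p:ℤ)^j * ((p:ℤ) * t) := by push_cast at ht ⊢; linarith
    exact mul_left_cancel₀ hne this
  obtain ⟨t, ht⟩ : p ∣ c.val := by exact_mod_cast h2
  refine ⟨(t : ZMod (p^n)), ?_⟩
  rw [← hc, ht]
  push_cast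
  ring

lemma adjoin_cancel (p n : ℕ) (hp : p.Prime) {f : Polynomial (ZMod (p^n))} (hf : f.Monic)
    {j : ℕ} (hj : j < n) {x : AdjoinRoot f}
    (h : (p:AdjoinRoot f)^(j+1) ∣ (p:AdjoinRoot f)^j * x) : (p:AdjoinRoot f) ∣ x := by
  obtain ⟨y, heq⟩ := h
  have hsm : ∀ (k : ℕ) (z : AdjoinRoot f),
      (p:AdjoinRoot f)^k * z = ((p:ZMod (p^n))^k) • z := by
    intro k z
    rw [Algebra.smul_def, map_pow, map_natCast]
  set B := (AdjoinRoot.powerBasis' hf).basis with hB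
  have hco : ∀ i, (p:ZMod (p^n))^j * (B.repr x i) = (p:ZMod (p^n))^(j+1) * (B.repr y i) := by
    intro i
    have := congrArg (fun z => B.repr z i) heq
    simp only [hsm] at this
    simpa [map_smul] using this
  have hdvd : ∀ i, (p : ZMod (p^n)) ∣ B.repr x i := fun i => zmod_cancel p n hp hj (hco i)
  choose t ht using hdvd
  have hx : x = ∑ i, (B.repr x i) • B i := (B.sum_repr x).symm
  rw [hx]
  refine ⟨∑ i, (t i) • B i, ?_⟩
  rw [Finset.mul_sum]
  refine Finset.sum_congr rfl (fun i _ => ?_)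
  rw [ht i, Algebra.smul_def, Algebra.smul_def, map_mul, map_natCast]
  ring

lemma frob_mod_p (p n m : ℕ) (hp : p.Prime) (hn : 0 < n) (hm : 0 < m)
    (f : Polynomial (ZMod (p ^ n))) (hf : f.Monic) (hdeg : f.natDegree = m)
    (hirr : Irreducible (f.map (ZMod.castHom (dvd_pow_self p hn.ne') (ZMod p))))
    (y : AdjoinRoot f) : (p : AdjoinRoot f) ∣ y ^ (p ^ m) - y := by
  haveI : Fact p.Prime := ⟨hp⟩
  set q : ZMod (p^n) →+* ZMod p := ZMod.castHom (dvd_pow_self p hn.ne') (ZMod p) with hq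
  set fbar := f.map q with hfbar
  haveI : Fact (Irreducible fbar) := ⟨hirr⟩
  have hfbarm : fbar.Monic := hf.map q
  have hfbardeg : fbar.natDegree = m := by rw [hfbar, hf.natDegree_map, hdeg]
  -- the residue field
  set K := AdjoinRoot fbar with hK
  haveI : Fintype K := Module.fintypeOfFintype (AdjoinRoot.powerBasis' hfbarm).basis
  have hcard : Fintype.card K = p ^ m := by
    rw [Module.card_fintype (AdjoinRoot.powerBasis' hfbarm).basis, ZMod.card, Fintype.card_fin]
    exact congrArg (p ^ ·) hfbardeg
  -- the reduction map
  have hroot : Polynomial.eval₂ ((AdjoinRoot.of fbar).comp q) (AdjoinRoot.root fbar) f = 0 := by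
    rw [← Polynomial.eval₂_map, ← hfbar]
    exact AdjoinRoot.eval₂_root fbar
  set φ : AdjoinRoot f →+* K :=
    AdjoinRoot.lift ((AdjoinRoot.of fbar).comp q) (AdjoinRoot.root fbar) hroot with hφ
  -- φ kills y^(p^m) - y
  have hker : φ (y ^ (p ^ m) - y) = 0 := by
    rw [map_sub, map_pow, ← hcard, FiniteField.pow_card, sub_self]
  -- kernel of φ is contained in (p)
  obtain ⟨g, hg⟩ : ∃ g, AdjoinRoot.mk f g = y ^ (p ^ m) - y := AdjoinRoot.mk_surjective _
  rw [← hg] at hker ⊢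
  rw [AdjoinRoot.lift_mk, ← Polynomial.eval₂_map] at hker
  have hker' : AdjoinRoot.mk fbar (g.map q) = 0 := by
    rw [← AdjoinRoot.aeval_eq, Polynomial.aeval_def, AdjoinRoot.algebraMap_eq]
    exact hker
  obtain ⟨hb, hhb⟩ : fbar ∣ g.map q := AdjoinRoot.mk_eq_zero.mp hker'
  have hqsurj : Function.Surjective q := by
    intro c
    refine ⟨((c.val : ℕ) : ZMod (p^n)), ?_⟩
    rw [map_natCast]
    exact ZMod.natCast_rightInverse c
  obtain ⟨h, rfl⟩ : ∃ h : Polynomial (ZMod (p^n)), h.map q = hb := Polynomial.map_surjective q hqsurj hb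
  have hzero : (g - f * h).map q = 0 := by
    rw [Polynomial.map_sub, Polynomial.map_mul, hhb, ← hfbar, sub_self]
  have hcoeff : ∀ i, (p : ZMod (p^n)) ∣ (g - f * h).coeff i := by
    intro i
    have h1 : q ((g - f * h).coeff i) = 0 := by
      rw [← Polynomial.coeff_map, hzero, Polynomial.coeff_zero]
    set c := (g - f * h).coeff i with hc
    have h2 : ((c.val : ℕ) : ZMod p) = 0 := by
      rw [← map_natCast q, ZMod.natCast_rightInverse c]
      exact h1
    obtain ⟨t, ht⟩ : p ∣ c.val := (ZMod.natCast_eq_zero_iff _ _).mp h2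
    refine ⟨(t : ZMod (p^n)), ?_⟩
    rw [← ZMod.natCast_rightInverse c, ht]
    push_cast
    ring
  obtain ⟨g₂, hg2⟩ : Polynomial.C (p : ZMod (p^n)) ∣ (g - f * h) :=
    (Polynomial.C_dvd_iff_dvd_coeff _ _).mpr hcoeff
  have hgeq : g = f * h + Polynomial.C (p : ZMod (p^n)) * g₂ := by
    rw [← hg2]; ring
  refine ⟨AdjoinRoot.mk f g₂, ?_⟩
  rw [hgeq, map_add, map_mul, map_mul, AdjoinRoot.mk_self, zero_mul, zero_add,
    AdjoinRoot.mk_C, map_natCast]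

theorem galois_ring_p_adic_representation (p n m : ℕ) (hp : p.Prime) (hn : 0 < n) (hm : 0 < m)
    (f : Polynomial (ZMod (p ^ n))) (hf : f.Monic) (hdeg : f.natDegree = m)
    (hirr : Irreducible (f.map (ZMod.castHom (dvd_pow_self p hn.ne') (ZMod p)))) :
    ∀ a : AdjoinRoot f, ∃! c : Fin n → AdjoinRoot f,
      (∀ i, (c i) ^ p ^ m = c i) ∧ a = ∑ i, c i * (p : AdjoinRoot f) ^ (i : ℕ) := by
  intro a
  have hA : ∀ y : (AdjoinRoot f), (p : (AdjoinRoot f)) ∣ y ^ (p ^ m) - y := frob_mod_p p n m hp hn hm f hf hdeg hirr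
  have hp0 : (p : (AdjoinRoot f))^n = 0 := by
    have hz : ((p : ZMod (p^n)))^n = 0 := by rw [← Nat.cast_pow, ZMod.natCast_self]
    rw [← map_natCast (algebraMap (ZMod (p^n)) (AdjoinRoot f)) p, ← map_pow, hz, map_zero]
  have hnle : n ≤ 1 + m * (n - 1) := by nlinarith [Nat.sub_add_cancel hn]
  -- powers of p^m fix Teichmüller elements
  have hfix : ∀ x : (AdjoinRoot f), x ^ (p ^ m) = x → ∀ e : ℕ, x ^ (p ^ (m * e)) = x := by
    intro x hx e
    induction e with
    | zero => simp
    | succ e ih =>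
        have : x ^ (p ^ (m * (e+1))) = (x ^ (p ^ (m * e))) ^ (p ^ m) := by
          rw [← pow_mul, ← pow_add, Nat.mul_succ]
        rw [this, ih, hx]
  -- injectivity of reduction on Teichmüller elements
  have hinj : ∀ x y : (AdjoinRoot f), x ^ (p ^ m) = x → y ^ (p ^ m) = y → (p : (AdjoinRoot f)) ∣ x - y → x = y := by
    intro x y hx hy hxy
    have h1 : (p : (AdjoinRoot f))^(1 + m * (n-1)) ∣ x ^ (p ^ (m * (n-1))) - y ^ (p ^ (m * (n-1))) :=
      aux_iter p hp le_rfl (by simpa using hxy) (m * (n-1))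
    rw [hfix x hx, hfix y hy] at h1
    have h2 : (p : (AdjoinRoot f))^n ∣ x - y := (pow_dvd_pow _ hnle).trans h1
    rw [hp0] at h2
    obtain ⟨t, ht⟩ := h2
    rw [zero_mul] at ht
    exact sub_eq_zero.mp ht
  -- Teichmüller lift
  set ω : (AdjoinRoot f) → (AdjoinRoot f) := fun y => y ^ (p ^ (m * (n-1))) with hω
  have hωT : ∀ y : (AdjoinRoot f), (ω y) ^ (p ^ m) = ω y := by
    intro y
    have h1 : (p : (AdjoinRoot f))^(1 + m * (n-1)) ∣ (y ^ (p^m)) ^ (p ^ (m * (n-1))) - y ^ (p ^ (m * (n-1))) :=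
      aux_iter p hp le_rfl (by simpa using hA y) (m * (n-1))
    have h2 : (p : (AdjoinRoot f))^n ∣ (y ^ (p^m)) ^ (p ^ (m * (n-1))) - y ^ (p ^ (m * (n-1))) :=
      (pow_dvd_pow _ hnle).trans h1
    rw [hp0] at h2
    obtain ⟨t, ht⟩ := h2
    rw [zero_mul] at ht
    have h3 := sub_eq_zero.mp ht
    calc (ω y) ^ (p ^ m) = (y ^ (p^m)) ^ (p ^ (m * (n-1))) := by
          rw [hω]; rw [← pow_mul, ← pow_mul, mul_comm (p ^ (m * (n-1)))]
    _ = ω y := h3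
  have hωe : ∀ y : (AdjoinRoot f), (p : (AdjoinRoot f)) ∣ y - ω y := by
    intro y
    rw [hω]
    simp only []
    have : ∀ e : ℕ, (p : (AdjoinRoot f)) ∣ y - y ^ (p ^ (m * e)) := by
      intro e
      induction e with
      | zero => simp
      | succ e ih =>
          have heq : y - y ^ (p ^ (m * (e+1)))
              = (y - y ^ (p ^ (m * e)))
                - ((y ^ (p ^ (m * e))) ^ (p ^ m) - y ^ (p ^ (m * e))) := by
            rw [← pow_mul, ← pow_add, Nat.mul_succ]
            ring
          rw [heq]
          exact dvd_sub ih (hA _)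
    exact this (n-1)
  -- existence with remainder
  have hex : ∀ k : ℕ, ∀ b : (AdjoinRoot f), ∃ c : Fin k → (AdjoinRoot f),
      (∀ i, (c i) ^ (p ^ m) = c i) ∧ (p : (AdjoinRoot f))^k ∣ b - ∑ i, c i * (p : (AdjoinRoot f)) ^ (i : ℕ) := by
    intro k
    induction k with
    | zero =>
        intro b
        exact ⟨fun i => i.elim0, fun i => i.elim0, by simp⟩
    | succ k ih =>
        intro b
        obtain ⟨t, htb⟩ := hωe b
        obtain ⟨c, hcT, hcd⟩ := ih t
        refine ⟨Fin.cons (ω b) c, ?_, ?_⟩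
        · intro i
          refine Fin.cases ?_ ?_ i
          · exact hωT b
          · intro j; simp only [Fin.cons_succ]; exact hcT j
        · obtain ⟨u, htu⟩ := hcd
          refine ⟨u, ?_⟩
          rw [Fin.sum_univ_succ]
          simp only [Fin.cons_zero, Fin.cons_succ, Fin.val_zero, pow_zero, mul_one, Fin.val_succ]
          have hsum : ∑ i : Fin k, c i * (p:(AdjoinRoot f)) ^ ((i:ℕ) + 1)
              = (p:(AdjoinRoot f)) * ∑ i : Fin k, c i * (p:(AdjoinRoot f)) ^ (i:ℕ) := by
            rw [Finset.mul_sum]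
            exact Finset.sum_congr rfl (fun i _ => by ring)
          rw [hsum]
          have : b - (ω b + (p:(AdjoinRoot f)) * ∑ i : Fin k, c i * (p:(AdjoinRoot f)) ^ (i:ℕ))
              = (b - ω b) - (p:(AdjoinRoot f)) * ∑ i : Fin k, c i * (p:(AdjoinRoot f)) ^ (i:ℕ) := by ring
          rw [this, htb, ← mul_sub, htu, pow_succ]
          ring
  obtain ⟨c, hcT, hcd⟩ := hex n a
  have hceq : a = ∑ i, c i * (p : (AdjoinRoot f)) ^ (i : ℕ) := by
    rw [hp0] at hcd
    obtain ⟨t, ht⟩ := hcd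
    rw [zero_mul] at ht
    exact sub_eq_zero.mp ht
  -- uniqueness
  have huniq : ∀ c d : Fin n → (AdjoinRoot f), (∀ i, (c i) ^ (p ^ m) = c i) → (∀ i, (d i) ^ (p ^ m) = d i) →
      (∑ i, c i * (p : (AdjoinRoot f)) ^ (i : ℕ)) = (∑ i, d i * (p : (AdjoinRoot f)) ^ (i : ℕ)) → c = d := by
    intro c d hcT' hdT' hsum
    have H : ∀ j : ℕ, ∀ hj : j < n, c ⟨j, hj⟩ = d ⟨j, hj⟩ := by
      intro j
      induction j using Nat.strong_induction_on with
      | _ j IH =>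
        intro hj
        have hzero : ∑ i : Fin n, (c i - d i) * (p : (AdjoinRoot f)) ^ (i : ℕ) = 0 := by
          have : ∑ i : Fin n, (c i - d i) * (p : (AdjoinRoot f)) ^ (i : ℕ)
              = (∑ i, c i * (p : (AdjoinRoot f)) ^ (i : ℕ)) - ∑ i, d i * (p : (AdjoinRoot f)) ^ (i : ℕ) := by
            rw [← Finset.sum_sub_distrib]
            exact Finset.sum_congr rfl (fun i _ => by ring)
          rw [this, hsum, sub_self]
        set J : Fin n := ⟨j, hj⟩ with hJ
        have hsplit := Finset.add_sum_erase Finset.univ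
          (fun i : Fin n => (c i - d i) * (p : (AdjoinRoot f)) ^ (i : ℕ)) (Finset.mem_univ J)
        rw [hzero] at hsplit
        have hrest : (p : (AdjoinRoot f))^(j+1) ∣
            ∑ i ∈ Finset.univ.erase J, (c i - d i) * (p : (AdjoinRoot f)) ^ (i : ℕ) := by
          apply Finset.dvd_sum
          intro i hi
          have hiJ : i ≠ J := (Finset.mem_erase.mp hi).1
          by_cases hlt : (i : ℕ) < j
          · have : c i = d i := by
              have := IH (i : ℕ) hlt i.isLt
              simpa [Fin.eta] using this
            rw [this, sub_self, zero_mul]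
            exact dvd_zero _
          · have hgt : j + 1 ≤ (i : ℕ) := by
              rcases Nat.lt_or_ge (i:ℕ) (j+1) with h | h
              · exfalso
                have : (i:ℕ) = j := by omega
                exact hiJ (Fin.ext this)
              · exact h
            exact Dvd.dvd.mul_left (pow_dvd_pow _ hgt) _
        have hjd : (p : (AdjoinRoot f))^(j+1) ∣ (p : (AdjoinRoot f))^j * (c J - d J) := by
          have : (p : (AdjoinRoot f))^j * (c J - d J)
              = - ∑ i ∈ Finset.univ.erase J, (c i - d i) * (p : (AdjoinRoot f)) ^ (i : ℕ) := by
            have h1 := eq_neg_of_add_eq_zero_left hsplit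
            have hJv : ((J : Fin n) : ℕ) = j := rfl
            calc (p : (AdjoinRoot f))^j * (c J - d J)
                = (c J - d J) * (p : (AdjoinRoot f)) ^ ((J : Fin n) : ℕ) := by
                  rw [hJv]; ring
            _ = _ := h1
          rw [this]
          exact hrest.neg_right
        have hpd : (p : (AdjoinRoot f)) ∣ c J - d J := adjoin_cancel p n hp hf hj hjd
        exact hinj _ _ (hcT' J) (hdT' J) hpd
    funext i
    have := H (i : ℕ) i.isLt
    simpa [Fin.eta] using this
  refine ⟨c, ⟨hcT, hceq⟩, ?_⟩
  rintro d ⟨hdT, hdeq⟩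
  exact huniq d c hdT hcT (by rw [← hdeq, ← hceq])
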